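/- If b' and s are bi-step vectors with Hamming weight ‖b'‖ ≤ ‖s‖, then for every nonzero v in the reciprocal lattice L*_s, the translated atom A^{b'} + v is disjoint from A^s. -/

import Mathlib

open Set

/-- Nyquist region `N_b` of the bi-step lattice `L_b`. -/
def nyq {d : ℕ} (lam : Fin d → ℝ) (k : Fin d → ℤ) (b : Fin d → Bool) :
    Set (Fin d → ℝ) :=
  {u | ∀ i, if b i then |u i| < 1 / (2 * lam i)
       else |u i| < 1 / (2 * ((k i : ℝ) * lam i))}

/-- Manhattan atom `A^b`. -/
def atom {d : ℕ} (lam : Fin d → ℝ) (k : Fin d → ℤ) (b : Fin d → Bool) :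
    Set (Fin d → ℝ) :=
  {u | ∀ i, if b i then 1 / (2 * ((k i : ℝ) * lam i)) ≤ |u i| ∧ |u i| < 1 / (2 * lam i)
       else |u i| < 1 / (2 * ((k i : ℝ) * lam i))}

/-- Reciprocal lattice `L*_s`. -/
def recipLat {d : ℕ} (lam : Fin d → ℝ) (k : Fin d → ℤ) (s : Fin d → Bool) :
    Set (Fin d → ℝ) :=
  {v | ∀ i, if s i then ∃ n : ℤ, v i = n / lam i
       else ∃ n : ℤ, v i = n / ((k i : ℝ) * lam i)}

/-- Hamming weight of a bi-step vector. -/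
def wt {d : ℕ} (b : Fin d → Bool) : ℕ := (Finset.univ.filter fun i => b i = true).card

theorem stmt18 {d : ℕ} (hd : 1 ≤ d) (lam : Fin d → ℝ) (k : Fin d → ℤ)
    (hlam : ∀ i, 0 < lam i) (hk : ∀ i, 1 < k i)
    (b' s : Fin d → Bool) (hw : wt b' ≤ wt s)
    (v : Fin d → ℝ) (hv : v ∈ recipLat lam k s) (hv0 : v ≠ 0) :
    Disjoint ((· + v) '' atom lam k b') (atom lam k s) := by
  rw [Set.disjoint_left]
  rintro w ⟨u, hu, rfl⟩ hw2
  have key : ∀ i, (s i = true → v i = 0 ∧ b' i = true) ∧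
      (s i = false → v i ≠ 0 → b' i = true) := by
    intro i
    have hL := hlam i
    have hK : (1:ℝ) < (k i : ℝ) := by exact_mod_cast hk i
    have hKL : 0 < (k i : ℝ) * lam i := by nlinarith
    have hu' := hu i
    have hw' := hw2 i
    simp only [Pi.add_apply] at hw'
    have hvv := hv i
    have hub : |u i| < 1 / (2 * lam i) := by
      by_cases hb : b' i = true
      · simp only [hb, if_true] at hu'; exact hu'.2
      · simp only [hb, Bool.false_eq_true, if_false] at hu'
        calc |u i| < 1 / (2 * ((k i:ℝ) * lam i)) := hu'
          _ ≤ 1 / (2 * lam i) := by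
            rw [div_le_div_iff₀ (by positivity) (by positivity)]; nlinarith
    constructor
    · intro hs
      simp only [hs, if_true] at hw' hvv
      obtain ⟨n, hn⟩ := hvv
      have habs : |v i| < 1 / lam i := by
        have h1 : |v i| ≤ |u i + v i| + |u i| := by
          have := abs_add_le (u i + v i) (-(u i)); simp at this
          calc |v i| = |u i + v i + -(u i)| := by ring_nf
            _ ≤ |u i + v i| + |u i| := by
              simpa using abs_add_le (u i + v i) (-(u i))
        have h2 := hw'.2
        calc |v i| ≤ |u i + v i| + |u i| := h1
          _ < 1 / (2 * lam i) + 1 / (2 * lam i) := by linarith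
          _ = 1 / lam i := by
            rw [← add_div]
            rw [div_eq_div_iff (by positivity) (by positivity)]
            ring
      have hn0 : n = 0 := by
        have : |(n:ℝ)| / lam i < 1 / lam i := by
          rw [hn] at habs; rwa [abs_div, abs_of_pos hL] at habs
        have h3 : |(n:ℝ)| < 1 := by
          rw [div_lt_div_iff₀ hL hL] at this; nlinarith
        have h4 : |n| < 1 := by exact_mod_cast h3
        have h5 := abs_lt.mp h4
        omega
      have hvz : v i = 0 := by rw [hn, hn0]; simp
      refine ⟨hvz, ?_⟩
      by_contra hb
      simp only [Bool.not_eq_true] at hb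
      simp only [hb, Bool.false_eq_true, if_false] at hu'
      have := hw'.1
      rw [hvz, add_zero] at this
      linarith
    · intro hs hvne
      simp only [hs, Bool.false_eq_true, if_false] at hw' hvv
      obtain ⟨n, hn⟩ := hvv
      have hn0 : n ≠ 0 := by
        intro h; apply hvne; rw [hn, h]; simp
      have hlb : 1 / ((k i:ℝ) * lam i) ≤ |v i| := by
        rw [hn, abs_div, abs_of_pos hKL]
        rw [div_le_div_iff₀ (by positivity) (by positivity)]
        have : (1:ℝ) ≤ |(n:ℝ)| := by
          have := Int.one_le_abs hn0
          exact_mod_cast this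
        nlinarith
      by_contra hb
      simp only [Bool.not_eq_true] at hb
      simp only [hb, Bool.false_eq_true, if_false] at hu'
      have h1 : |v i| ≤ |u i + v i| + |u i| := by
        calc |v i| = |u i + v i + -(u i)| := by ring_nf
          _ ≤ |u i + v i| + |u i| := by
            simpa using abs_add_le (u i + v i) (-(u i))
      have : |v i| < 1 / ((k i:ℝ) * lam i) := by
        calc |v i| ≤ |u i + v i| + |u i| := h1
          _ < 1 / (2 * ((k i:ℝ) * lam i)) + 1 / (2 * ((k i:ℝ) * lam i)) := by linarith
          _ = 1 / ((k i:ℝ) * lam i) := by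
            rw [← add_div]
            rw [div_eq_div_iff (by positivity) (by positivity)]
            ring
      linarith
  obtain ⟨i0, hi0⟩ : ∃ i, v i ≠ 0 := by
    by_contra h; push_neg at h; exact hv0 (funext h)
  have hs0 : s i0 = false := by
    cases hsi : s i0 with
    | false => rfl
    | true => exact absurd ((key i0).1 hsi).1 hi0
  have hb0 : b' i0 = true := (key i0).2 hs0 hi0
  have hsub : (Finset.univ.filter fun i => s i = true) ⊆
      (Finset.univ.filter fun i => b' i = true) := by
    intro i hi
    simp only [Finset.mem_filter, Finset.mem_univ, true_and] at *
    exact ((key i).1 hi).2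
  have hlt : wt s < wt b' := by
    apply Finset.card_lt_card
    refine ⟨hsub, fun h => ?_⟩
    have : i0 ∈ Finset.univ.filter fun i => s i = true := by
      apply h
      simp [hb0]
    simp [hs0] at this
  omega
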